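/- For every ℓ ≥ 1, the sequences (a_n) and (b_n) defined by a_0 = ℓ+1, b_0 = 2ℓ+2, and for n ≥ 1, a_n = mex({a_i, b_i : i < n} ∪ {0,1,…,ℓ}) and b_n = a_n + n + ℓ + 1, are both strictly increasing. -/
import Mathlib


/-- The minimum excluded value of a set of natural numbers. -/
noncomputable def mex (S : Set ℕ) : ℕ := sInf {m : ℕ | m ∉ S}

/-- `MexSeq ℓ a b` says that `a`, `b` are the sequences defined by
    `a 0 = ℓ+1`, `b 0 = 2ℓ+2`, and for `n ≥ 1`:
    `a n = mex({a i, b i : i < n} ∪ {0,…,ℓ})`, `b n = a n + n + ℓ + 1`. -/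
def MexSeq (ℓ : ℕ) (a b : ℕ → ℕ) : Prop :=
  a 0 = ℓ + 1 ∧ b 0 = 2 * ℓ + 2 ∧
  (∀ n : ℕ, 1 ≤ n →
    a n = mex ({m : ℕ | ∃ i < n, m = a i ∨ m = b i} ∪ {m : ℕ | m ≤ ℓ})) ∧
  (∀ n : ℕ, 1 ≤ n → b n = a n + n + ℓ + 1)

lemma mex_not_mem {S : Set ℕ} (hS : S.Finite) : mex S ∉ S :=
  Nat.sInf_mem hS.infinite_compl.nonempty

lemma mex_gt {S : Set ℕ} (hS : S.Finite) {k : ℕ} (hk : ∀ m ≤ k, m ∈ S) :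
    k < mex S := by
  by_contra h
  push_neg at h
  exact mex_not_mem hS (hk _ h)

lemma le_mex_of_subset {S T : Set ℕ} (hT : T.Finite) (hST : S ⊆ T) :
    mex S ≤ mex T := by
  apply Nat.sInf_le
  intro hmem
  exact mex_not_mem hT (hST hmem)

theorem mexSeq_strictMono (ℓ : ℕ) (hℓ : 1 ≤ ℓ) (a b : ℕ → ℕ)
    (hab : MexSeq ℓ a b) : StrictMono a ∧ StrictMono b := by
  obtain ⟨ha0, hb0, ha, hb⟩ := hab
  have ha' : ∀ n, 1 ≤ n →
      a n = mex (({m : ℕ | ∃ i < n, m = a i ∨ m = b i} ∪ {m : ℕ | m ≤ ℓ} : Set ℕ)) :=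
    fun n hn => ha n hn
  have hfin : ∀ n, (({m : ℕ | ∃ i < n, m = a i ∨ m = b i} ∪ {m : ℕ | m ≤ ℓ} : Set ℕ)).Finite := by
    intro n
    refine Set.Finite.union (Set.Finite.subset
      (((Set.finite_Iio n).image a).union ((Set.finite_Iio n).image b)) ?_) (Set.finite_Iic ℓ)
    rintro m ⟨i, hi, (rfl | rfl)⟩
    · exact Or.inl ⟨i, hi, rfl⟩
    · exact Or.inr ⟨i, hi, rfl⟩
  have hmono : ∀ n, (({m : ℕ | ∃ i < n, m = a i ∨ m = b i} ∪ {m : ℕ | m ≤ ℓ} : Set ℕ)) ⊆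
      (({m : ℕ | ∃ i < n + 1, m = a i ∨ m = b i} ∪ {m : ℕ | m ≤ ℓ} : Set ℕ)) := by
    intro n m hm
    rcases hm with ⟨i, hi, h⟩ | h
    · exact Or.inl ⟨i, hi.trans (Nat.lt_succ_self n), h⟩
    · exact Or.inr h
  have hastep : ∀ n, a n < a (n + 1) := by
    intro n
    rcases Nat.eq_zero_or_pos n with rfl | hn
    · rw [ha' 1 le_rfl, ha0]
      apply mex_gt (hfin 1)
      intro m hm
      rcases Nat.lt_or_ge m (ℓ + 1) with h | h
      · exact Or.inr (Nat.lt_succ_iff.mp h)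
      · exact Or.inl ⟨0, Nat.zero_lt_one, Or.inl (by omega)⟩
    · have h1 := ha' n hn
      have h2 := ha' (n + 1) (by omega)
      have hle : a n ≤ a (n + 1) := by
        rw [h1, h2]; exact le_mex_of_subset (hfin (n + 1)) (hmono n)
      have hne : a (n + 1) ≠ a n := by
        rw [h2]
        intro hc
        exact mex_not_mem (hfin (n + 1))
          (hc ▸ (Or.inl ⟨n, Nat.lt_succ_self n, Or.inl rfl⟩))
      omega
  constructor
  · exact strictMono_nat_of_lt_succ hastep
  · apply strictMono_nat_of_lt_succ
    intro n
    rcases Nat.eq_zero_or_pos n with rfl | hn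
    · have h1 := hb 1 le_rfl
      have h2 := hastep 0
      simp only [zero_add] at h2 ⊢
      omega
    · have h1 := hb n hn
      have h2 := hb (n + 1) (by omega)
      have h3 := hastep n
      omega
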